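/- With the generic sequence (δ_i, σ_i), i = 0,…,p and the inductively defined sequence (i_k, r_k), k = 0,…,m as above, if moreover σ_{i_m} = 0, then letting ψ(x) = min_{0 ≤ i ≤ p} (δ_i + σ_i x), one has Σ_{k=0}^{m-1} (δ_{i_{k+1}} − δ_{i_k})(σ_{i_k} + σ_{i_{k+1}} − 1) = ∫_0^∞ ψ'(x)(ψ'(x) − 1) dx, where ψ' is the (almost everywhere defined) derivative of the piecewise linear function ψ. -/

import Mathlib

open MeasureTheory Set

lemma affine_pos_between {a b q1 q2 x : ℝ} (h1 : 0 < a + b * q1)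
    (h2 : 0 < a + b * q2) (hx1 : q1 < x) (hx2 : x < q2) : 0 < a + b * x := by
  nlinarith [mul_pos (sub_pos.2 hx1) h2, mul_pos (sub_pos.2 hx2) h1]

/-- With `σ (i m) = 0`, the breakpoint sum equals the integral
`∫_0^∞ ψ'(x)(ψ'(x) - 1) dx`, where `ψ` is the lower envelope of the lines and `ψ'`
its a.e. derivative. -/
theorem envelope_sum_eq_integral
    (p m : ℕ) (δ σ : Fin (p + 1) → ℚ)
    (hδ0 : δ 0 = 0) (hδnn : ∀ i, 0 ≤ δ i) (hσnn : ∀ i, 0 ≤ σ i)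
    (hδinj : Function.Injective δ)
    (hgen : ∀ i j l : Fin (p + 1), i ≠ j → j ≠ l → i ≠ l →
      ∀ x : ℚ, δ i + σ i * x = δ j + σ j * x → δ j + σ j * x ≠ δ l + σ l * x)
    (i : ℕ → Fin (p + 1)) (r : ℕ → ℚ)
    (hi0 : i 0 = 0) (hr0 : r 0 = 0)
    (hrmono : ∀ k < m, r k < r (k + 1))
    (hne : ∀ k < m, i (k + 1) ≠ i k)
    (heq : ∀ k < m,
      δ (i k) + σ (i k) * r (k + 1) = δ (i (k + 1)) + σ (i (k + 1)) * r (k + 1))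
    (hmin : ∀ k < m, ∀ j, δ (i k) + σ (i k) * r (k + 1) ≤ δ j + σ j * r (k + 1))
    (hstrict : ∀ k < m, ∀ x : ℚ, r k < x → x < r (k + 1) →
      ∀ j, j ≠ i k → δ (i k) + σ (i k) * x < δ j + σ j * x)
    (hstop : ∀ x : ℚ, r m < x → ∀ j, j ≠ i m → δ (i m) + σ (i m) * x < δ j + σ j * x)
    (hσm : σ (i m) = 0)
    (ψ ψ' : ℝ → ℝ)
    (hψ : ∀ x : ℝ, ψ x = ⨅ j : Fin (p + 1), ((δ j : ℝ) + (σ j : ℝ) * x))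
    (hd : ∀ x : ℝ, 0 < x → (∀ k ≤ m, x ≠ (r k : ℝ)) → HasDerivAt ψ (ψ' x) x) :
    ∑ k ∈ Finset.range m,
        (-(δ (i k) : ℝ) + (δ (i (k + 1)) : ℝ)) * ((σ (i k) : ℝ) + (σ (i (k + 1)) : ℝ) - 1)
      = ∫ x in Ioi (0 : ℝ), ψ' x * (ψ' x - 1) := by
  -- monotonicity of r
  have hrle : ∀ a b : ℕ, a ≤ b → b ≤ m → r a ≤ r b := by
    intro a b
    induction b with
    | zero =>
      intro hab _
      have : a = 0 := by omega
      subst this; exact le_refl _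
    | succ n ih =>
      intro hab hbm
      rcases Nat.lt_or_ge a (n+1) with h | h
      · have h1 : r a ≤ r n := ih (by omega) (by omega)
        exact h1.trans (hrmono n (by omega)).le
      · have : a = n + 1 := by omega
        subst this; exact le_refl _
  have hrlt : ∀ a b : ℕ, a < b → b ≤ m → r a < r b := by
    intro a b hab hbm
    have h1 : r a ≤ r (b - 1) := hrle a (b-1) (by omega) (by omega)
    have h2 : r (b-1) < r (b-1+1) := hrmono (b-1) (by omega)
    have : b - 1 + 1 = b := by omega
    rw [this] at h2
    exact h1.trans_lt h2
  have hrnn : ∀ k, k ≤ m → (0:ℚ) ≤ r k := by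
    intro k hk
    have := hrle 0 k (Nat.zero_le k) hk
    rwa [hr0] at this
  -- the lines
  set L : Fin (p+1) → ℝ → ℝ := fun j x => (δ j : ℝ) + (σ j : ℝ) * x with hL
  -- strict minimality over real intervals
  have hstrictR : ∀ k, k < m → ∀ x : ℝ, (r k : ℝ) < x → x < (r (k+1) : ℝ) →
      ∀ j, j ≠ i k → L (i k) x < L j x := by
    intro k hk x hx1 hx2 j hj
    obtain ⟨q1, hq11, hq12⟩ := exists_rat_btwn hx1
    obtain ⟨q2, hq21, hq22⟩ := exists_rat_btwn hx2
    have h1 : δ (i k) + σ (i k) * q1 < δ j + σ j * q1 :=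
      hstrict k hk q1 (by exact_mod_cast hq11) (by exact_mod_cast (hq12.trans hx2)) j hj
    have h2 : δ (i k) + σ (i k) * q2 < δ j + σ j * q2 :=
      hstrict k hk q2 (by exact_mod_cast (hx1.trans hq21)) (by exact_mod_cast hq22) j hj
    have h1' : (0:ℝ) < ((δ j : ℝ) - δ (i k)) + ((σ j : ℝ) - σ (i k)) * (q1:ℝ) := by
      have h1q : (0:ℚ) < (δ j - δ (i k)) + (σ j - σ (i k)) * q1 := by linarith
      exact_mod_cast h1q
    have h2' : (0:ℝ) < ((δ j : ℝ) - δ (i k)) + ((σ j : ℝ) - σ (i k)) * (q2:ℝ) := by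
      have h2q : (0:ℚ) < (δ j - δ (i k)) + (σ j - σ (i k)) * q2 := by linarith
      exact_mod_cast h2q
    have := affine_pos_between h1' h2' hq12 hq21
    simp only [hL]; linarith
  have hstopR : ∀ x : ℝ, (r m : ℝ) < x → ∀ j, j ≠ i m → L (i m) x < L j x := by
    intro x hx j hj
    obtain ⟨q1, hq11, hq12⟩ := exists_rat_btwn hx
    obtain ⟨q2, hq21, hq22⟩ := exists_rat_btwn (lt_add_one x)
    have h1 : δ (i m) + σ (i m) * q1 < δ j + σ j * q1 :=
      hstop q1 (by exact_mod_cast hq11) j hj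
    have h2 : δ (i m) + σ (i m) * q2 < δ j + σ j * q2 :=
      hstop q2 (by exact_mod_cast (hx.trans hq21)) j hj
    have h1' : (0:ℝ) < ((δ j : ℝ) - δ (i m)) + ((σ j : ℝ) - σ (i m)) * (q1:ℝ) := by
      have h1q : (0:ℚ) < (δ j - δ (i m)) + (σ j - σ (i m)) * q1 := by linarith
      exact_mod_cast h1q
    have h2' : (0:ℝ) < ((δ j : ℝ) - δ (i m)) + ((σ j : ℝ) - σ (i m)) * (q2:ℝ) := by
      have h2q : (0:ℚ) < (δ j - δ (i m)) + (σ j - σ (i m)) * q2 := by linarith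
      exact_mod_cast h2q
    have := affine_pos_between h1' h2' hq12 hq21
    simp only [hL]; linarith
  -- ψ equals the minimizing line
  have hψline : ∀ (j0 : Fin (p+1)) (x : ℝ), (∀ j, j ≠ j0 → L j0 x < L j x) → ψ x = L j0 x := by
    intro j0 x hlt
    rw [hψ]
    refine le_antisymm (ciInf_le (Set.Finite.bddBelow (Set.finite_range _)) j0) (le_ciInf ?_)
    intro j
    rcases eq_or_ne j j0 with h | h
    · subst h; exact le_refl _
    · exact (hlt j h).le
  have hψeq : ∀ k, k < m → ∀ x : ℝ, (r k : ℝ) < x → x < (r (k+1) : ℝ) → ψ x = L (i k) x :=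
    fun k hk x hx1 hx2 => hψline (i k) x (fun j hj => hstrictR k hk x hx1 hx2 j hj)
  have hψtop : ∀ x : ℝ, (r m : ℝ) < x → ψ x = L (i m) x :=
    fun x hx => hψline (i m) x (fun j hj => hstopR x hx j hj)
  -- derivative values
  have hdline : ∀ (j : Fin (p+1)) (x : ℝ), HasDerivAt (L j) ((σ j : ℝ)) x := by
    intro j x
    exact (((hasDerivAt_id x).const_mul ((σ j : ℝ))).const_add ((δ j : ℝ))).congr_deriv (mul_one _)
  have hψ'eq : ∀ k, k < m → ∀ x : ℝ, (r k : ℝ) < x → x < (r (k+1) : ℝ) → ψ' x = (σ (i k) : ℝ) := by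
    intro k hk x hx1 hx2
    have hx0 : (0:ℝ) < x := by
      have : (0:ℚ) ≤ r k := hrnn k (by omega)
      have : ((0:ℚ):ℝ) ≤ (r k : ℝ) := by exact_mod_cast this
      simpa using lt_of_le_of_lt (by simpa using this) hx1
    have hxne : ∀ k' ≤ m, x ≠ (r k' : ℝ) := by
      intro k' hk' hcontr
      rcases Nat.lt_or_ge k' (k+1) with h | h
      · have : r k' ≤ r k := hrle k' k (by omega) (by omega)
        have : (r k' : ℝ) ≤ (r k : ℝ) := by exact_mod_cast this
        linarith [hcontr ▸ hx1]
      · have : r (k+1) ≤ r k' := hrle (k+1) k' h hk'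
        have : ((r (k+1) : ℚ) : ℝ) ≤ (r k' : ℝ) := by exact_mod_cast this
        linarith [hcontr ▸ hx2]
    have hev : (fun y => L (i k) y) =ᶠ[nhds x] ψ := by
      filter_upwards [Ioo_mem_nhds hx1 hx2] with y hy
      exact (hψeq k hk y hy.1 hy.2).symm
    have hder : HasDerivAt ψ ((σ (i k) : ℝ)) x := (hdline (i k) x).congr_of_eventuallyEq hev.symm
    exact (hd x hx0 hxne).unique hder
  have hψ'top : ∀ x : ℝ, (r m : ℝ) < x → ψ' x = 0 := by
    intro x hx
    have hx0 : (0:ℝ) < x := by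
      have h2 : (0:ℝ) ≤ ((r m : ℚ) : ℝ) := by exact_mod_cast hrnn m le_rfl
      linarith
    have hxne : ∀ k' ≤ m, x ≠ (r k' : ℝ) := by
      intro k' hk' hcontr
      have : r k' ≤ r m := hrle k' m hk' le_rfl
      have : (r k' : ℝ) ≤ (r m : ℝ) := by exact_mod_cast this
      linarith [hcontr ▸ hx]
    have hev : (fun y => L (i m) y) =ᶠ[nhds x] ψ := by
      filter_upwards [Ioi_mem_nhds hx] with y hy
      exact (hψtop y hy).symm
    have hder : HasDerivAt ψ ((σ (i m) : ℝ)) x := (hdline (i m) x).congr_of_eventuallyEq hev.symm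
    have := (hd x hx0 hxne).unique hder
    rw [this, hσm]; simp
  -- step function
  set c : ℕ → ℝ := fun k => (σ (i k) : ℝ) * ((σ (i k) : ℝ) - 1) with hc
  set f : ℝ → ℝ := fun x => ∑ k ∈ Finset.range m,
      Set.indicator (Ioo ((r k : ℝ)) ((r (k+1) : ℝ))) (fun _ => c k) x with hf
  -- a.e. equality
  have hae : (fun x => ψ' x * (ψ' x - 1)) =ᵐ[volume.restrict (Ioi (0:ℝ))] f := by
    have hSm : volume ((fun k => ((r k : ℝ))) '' Set.Iic m) = 0 :=
      (Set.Finite.image _ (Set.finite_Iic m)).measure_zero _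
    have hS : ∀ᵐ x : ℝ, x ∉ (fun k => ((r k : ℝ))) '' Set.Iic m := by
      rw [← compl_mem_ae_iff] at hSm
      exact hSm
    filter_upwards [ae_restrict_mem measurableSet_Ioi, ae_restrict_of_ae hS] with x hx hxS
    have hxne : ∀ k ≤ m, x ≠ (r k : ℝ) := by
      intro k hk hcontr
      exact hxS ⟨k, hk, hcontr.symm⟩
    rcases lt_or_ge ((r m : ℝ)) x with hgt | hle
    · -- beyond r m
      rw [hψ'top x hgt]
      have : f x = 0 := by
        simp only [hf]
        refine Finset.sum_eq_zero fun k hk => ?_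
        refine Set.indicator_of_notMem ?_ _
        intro hmem
        have : r (k+1) ≤ r m := hrle (k+1) m (Finset.mem_range.1 hk) le_rfl
        have : ((r (k+1) : ℚ) : ℝ) ≤ (r m : ℝ) := by exact_mod_cast this
        have := hmem.2
        linarith
      rw [this]; ring
    · have hlt : x < (r m : ℝ) := lt_of_le_of_ne hle (hxne m le_rfl)
      -- find the interval
      have hfind : ∀ n, n ≤ m → x < (r n : ℝ) → ∃ k, k < n ∧ (r k : ℝ) < x ∧ x < (r (k+1) : ℝ) := by
        intro n
        induction n with
        | zero =>
          intro _ h0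
          rw [hr0] at h0
          simp at h0
          exact absurd hx (by simp; linarith)
        | succ n ih =>
          intro hn hlt'
          rcases lt_or_ge ((r n : ℝ)) x with h | h
          · exact ⟨n, Nat.lt_succ_self n, h, hlt'⟩
          · have hxn : x < (r n : ℝ) := lt_of_le_of_ne h (hxne n (by omega))
            obtain ⟨k, hk, h1, h2⟩ := ih (by omega) hxn
            exact ⟨k, by omega, h1, h2⟩
      obtain ⟨k, hkm, hk1, hk2⟩ := hfind m le_rfl hlt
      rw [hψ'eq k hkm x hk1 hk2]
      have : f x = c k := by
        simp only [hf]
        rw [Finset.sum_eq_single_of_mem k (Finset.mem_range.2 hkm)]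
        · exact Set.indicator_of_mem (show x ∈ Ioo ((r k : ℝ)) ((r (k+1) : ℝ)) from ⟨hk1, hk2⟩) _
        · intro k' hk' hne'
          have hk'm : k' < m := Finset.mem_range.1 hk'
          refine Set.indicator_of_notMem ?_ _
          intro hmem
          rcases Nat.lt_or_ge k' k with h | h
          · have : r (k'+1) ≤ r k := hrle (k'+1) k h (by omega)
            have : ((r (k'+1) : ℚ) : ℝ) ≤ (r k : ℝ) := by exact_mod_cast this
            linarith [hmem.2]
          · have hkk' : k + 1 ≤ k' := by omega
            have : r (k+1) ≤ r k' := hrle (k+1) k' hkk' (by omega)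
            have : ((r (k+1) : ℚ) : ℝ) ≤ (r k' : ℝ) := by exact_mod_cast this
            linarith [hmem.1]
      rw [this, hc]
  have hint : ∫ x in Ioi (0:ℝ), ψ' x * (ψ' x - 1) = ∫ x in Ioi (0:ℝ), f x :=
    integral_congr_ae hae
  -- compute the integral of f
  have hIoo_subset : ∀ k, k < m → Ioo ((r k : ℝ)) ((r (k+1) : ℝ)) ⊆ Ioi (0:ℝ) := by
    intro k hk y hy
    have h2 : (0:ℝ) ≤ ((r k : ℚ) : ℝ) := by exact_mod_cast hrnn k (by omega)
    exact mem_Ioi.2 (lt_of_le_of_lt h2 hy.1)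
  have hfint : ∫ x in Ioi (0:ℝ), f x
      = ∑ k ∈ Finset.range m, ((r (k+1) : ℝ) - (r k : ℝ)) * c k := by
    have hintegr : ∀ k ∈ Finset.range m, Integrable
        (fun x => Set.indicator (Ioo ((r k : ℝ)) ((r (k+1) : ℝ))) (fun _ => c k) x)
        (volume.restrict (Ioi (0:ℝ))) := by
      intro k hk
      refine Integrable.restrict ?_
      refine IntegrableOn.integrable_indicator ?_ measurableSet_Ioo
      refine integrableOn_const ?_
      rw [Real.volume_Ioo]
      exact ENNReal.ofReal_ne_top
    simp only [hf]
    rw [integral_finset_sum _ hintegr]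
    refine Finset.sum_congr rfl fun k hk => ?_
    · 
      rw [setIntegral_indicator measurableSet_Ioo]
      have hsub := hIoo_subset k (Finset.mem_range.1 hk)
      have hinter : Ioi (0:ℝ) ∩ Ioo ((r k : ℝ)) ((r (k+1) : ℝ)) = Ioo ((r k : ℝ)) ((r (k+1) : ℝ)) :=
        inter_eq_self_of_subset_right hsub
      rw [hinter, setIntegral_const, Real.volume_real_Ioo_of_le]
      · simp [smul_eq_mul]
      · have : r k < r (k+1) := hrmono k (Finset.mem_range.1 hk)
        have : (r k : ℝ) < (r (k+1) : ℝ) := by exact_mod_cast this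
        linarith
  rw [hint, hfint]
  -- algebraic identity with telescoping
  set F : ℕ → ℝ := fun k => (r k : ℝ) * c k with hF
  have hterm : ∀ k ∈ Finset.range m,
      (-(δ (i k) : ℝ) + (δ (i (k + 1)) : ℝ)) * ((σ (i k) : ℝ) + (σ (i (k + 1)) : ℝ) - 1)
      = ((r (k+1) : ℝ) - (r k : ℝ)) * c k + (F k - F (k+1)) := by
    intro k hk
    have h := heq k (Finset.mem_range.1 hk)
    have hR : (δ (i k) : ℝ) + (σ (i k) : ℝ) * (r (k+1) : ℝ)
        = (δ (i (k+1)) : ℝ) + (σ (i (k+1)) : ℝ) * (r (k+1) : ℝ) := by exact_mod_cast h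
    simp only [hF, hc]
    linear_combination (-(σ (i k) : ℝ) - (σ (i (k+1)) : ℝ) + 1) * hR
  rw [Finset.sum_congr rfl hterm, Finset.sum_add_distrib, Finset.sum_range_sub']
  have hF0 : F 0 = 0 := by
    simp only [hF]
    rw [hr0]; simp
  have hFm : F m = 0 := by
    simp only [hF, hc]
    rw [hσm]; simp
  rw [hF0, hFm]; ring
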